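/- Let A and B be nonempty bounded open convex subsets of ℝ^m and let ε > 0 be such that the Hausdorff distance between A and B is at most ε and ε < ρ(A), where ρ denotes inradius. Then ρ(B) ≥ ρ(A) − ε. -/

import Mathlib

open MeasureTheory Metric

/-- The inradius of a subset of Euclidean space: the supremum of radii of open balls
contained in the set. -/
noncomputable def inradius {m : ℕ} (A : Set (EuclideanSpace ℝ (Fin m))) : ℝ :=
  sSup {r : ℝ | 0 < r ∧ ∃ x, ball x r ⊆ A}

/-- if `A, B ⊆ ℝ^m` are nonempty bounded open convex sets whose Hausdorff
distance is at most `ε` with `ε < ρ(A)`, then `ρ(B) ≥ ρ(A) - ε`. -/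
theorem inradius_ge_sub_of_hausdorffDist_le (m : ℕ)
    (A B : Set (EuclideanSpace ℝ (Fin m)))
    (hAne : A.Nonempty) (hAbd : Bornology.IsBounded A)
    (hAopen : IsOpen A) (hAconv : Convex ℝ A)
    (hBne : B.Nonempty) (hBbd : Bornology.IsBounded B)
    (hBopen : IsOpen B) (hBconv : Convex ℝ B)
    (ε : ℝ) (hε : 0 < ε)
    (hH : hausdorffDist A B ≤ ε) (hεlt : ε < inradius A) :
    inradius A - ε ≤ inradius B := by
  rcases subsingleton_or_nontrivial (EuclideanSpace ℝ (Fin m)) with hsub | hnt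
  · -- trivial space: A = B = the whole (single point) space
    have hAB : A = B := Set.eq_of_subset_of_subset
      (fun a ha => hBne.elim fun b hb => (Subsingleton.elim a b) ▸ hb)
      (fun b hb => hAne.elim fun a ha => (Subsingleton.elim b a) ▸ ha)
    rw [hAB]
    linarith
  -- nontrivial case
  have hEdist : EMetric.hausdorffEdist A B ≠ ⊤ :=
    Metric.hausdorffEdist_ne_top_of_nonempty_of_bounded hAne hBne hAbd hBbd
  obtain ⟨R, hR⟩ := hBbd.subset_closedBall 0
  have hBdd : BddAbove {r : ℝ | 0 < r ∧ ∃ x, ball x r ⊆ B} := by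
    refine ⟨4 * R, fun r hr => ?_⟩
    obtain ⟨hrpos, x, hx⟩ := hr
    obtain ⟨u, hu⟩ := exists_norm_eq (EuclideanSpace ℝ (Fin m)) (le_of_lt (by positivity : (0:ℝ) < r / 2))
    have hx1 : x ∈ closedBall (0 : EuclideanSpace ℝ (Fin m)) R := hR (hx (mem_ball_self hrpos))
    have hx2 : x + u ∈ closedBall (0 : EuclideanSpace ℝ (Fin m)) R := by
      apply hR; apply hx
      simp [mem_ball, dist_eq_norm, hu]
      linarith
    have := dist_triangle x (0 : EuclideanSpace ℝ (Fin m)) (x + u)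
    have h1 : dist x (0 : EuclideanSpace ℝ (Fin m)) ≤ R := mem_closedBall.1 hx1
    have h2 : dist (0 : EuclideanSpace ℝ (Fin m)) (x + u) ≤ R := by
      rw [dist_comm]; exact mem_closedBall.1 hx2
    have h3 : dist x (x + u) = r / 2 := by
      rw [dist_eq_norm]; simp [hu]
    linarith
  have hBnonneg : 0 ≤ inradius B := Real.sSup_nonneg fun r hr => hr.1.le
  have key : ∀ r ∈ {r : ℝ | 0 < r ∧ ∃ x, ball x r ⊆ A}, r ≤ inradius B + ε := by
    rintro r ⟨hrpos, x, hx⟩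
    rcases le_or_gt r ε with h | h
    · linarith
    -- show ball x (r - ε) ⊆ B
    have hball : ball x (r - ε) ⊆ B := by
      intro y hy
      by_contra hyB
      obtain ⟨f, hf⟩ := geometric_hahn_banach_open_point hBconv hBopen hyB
      have hfne : f ≠ 0 := by
        intro h0
        obtain ⟨b, hb⟩ := hBne
        have := hf b hb
        rw [h0] at this
        simp at this
      set v : EuclideanSpace ℝ (Fin m) := (InnerProductSpace.toDual ℝ (EuclideanSpace ℝ (Fin m))).symm f with hv
      have hvne : v ≠ 0 := by
        intro h0
        apply hfne
        have := (InnerProductSpace.toDual ℝ (EuclideanSpace ℝ (Fin m))).symm.map_eq_zero_iff.1 h0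
        exact this
      have hvnorm : 0 < ‖v‖ := norm_pos_iff.2 hvne
      set w : EuclideanSpace ℝ (Fin m) := ‖v‖⁻¹ • v with hw
      have hwv : ∀ z : EuclideanSpace ℝ (Fin m), (inner ℝ w z : ℝ) = ‖v‖⁻¹ * f z := by
        intro z
        rw [hw, real_inner_smul_left, hv, InnerProductSpace.toDual_symm_apply]
      have hwnorm : ‖w‖ = 1 := by
        rw [hw, norm_smul]
        simp [abs_of_pos (inv_pos.2 hvnorm)]
        field_simp
      have hyx : dist y x < r - ε := mem_ball.1 hy
      set t : ℝ := (ε + (r - dist y x)) / 2 with ht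
      have htε : ε < t := by rw [ht]; linarith
      have htr : t < r - dist y x := by rw [ht]; linarith
      set z : EuclideanSpace ℝ (Fin m) := y + t • w with hz
      have hzA : z ∈ A := by
        apply hx
        rw [mem_ball]
        calc dist z x ≤ dist z y + dist y x := dist_triangle z y x
          _ = t + dist y x := by
              rw [hz, dist_eq_norm]
              simp [norm_smul, hwnorm, abs_of_pos (lt_trans hε htε)]
          _ < r := by linarith
      have hzinf : infDist z B ≤ ε :=
        le_trans (infDist_le_hausdorffDist_of_mem hzA hEdist) hH
      have hlt : infDist z B < t := lt_of_le_of_lt hzinf htε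
      obtain ⟨b, hbB, hbd⟩ := (infDist_lt_iff hBne).1 hlt
      -- but dist z b > t for all b ∈ B
      have hinner : (inner ℝ w (z - b) : ℝ) ≤ dist z b := by
        calc (inner ℝ w (z - b) : ℝ) ≤ ‖w‖ * ‖z - b‖ := real_inner_le_norm w (z - b)
          _ = dist z b := by rw [hwnorm, one_mul, dist_eq_norm]
      have hcomp : (inner ℝ w (z - b) : ℝ) = t + ‖v‖⁻¹ * (f y - f b) := by
        rw [hz, inner_sub_right, inner_add_right, real_inner_smul_right,
          real_inner_self_eq_norm_sq, hwnorm, hwv y, hwv b]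
        ring
      have hfb : f b < f y := hf b hbB
      have hpos : 0 < ‖v‖⁻¹ * (f y - f b) :=
        mul_pos (inv_pos.2 hvnorm) (by linarith)
      have h1 := hinner
      rw [hcomp] at h1
      linarith
    have : r - ε ∈ {r : ℝ | 0 < r ∧ ∃ x, ball x r ⊆ B} := ⟨by linarith, x, hball⟩
    have := le_csSup hBdd this
    unfold inradius
    linarith
  have : inradius A ≤ inradius B + ε := Real.sSup_le key (by linarith)
  linarith
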